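/- Let a regular topological space X be covered by an increasing sequence (Aₙ)ₙ∈ℕ of closed subsets, each of which is an ℵ₀-space (in the subspace topology), and suppose every compact subset of X is contained in some Aₙ. Then X is an ℵ₀-space. -/

import Mathlib

open Filter Topology Set

/-- `N` is a k-network for `X`: for every compact `K` contained in an open `U` there is a
finite subfamily `F ⊆ N` with `K ⊆ ⋃₀ F ⊆ U`. -/
def IsKNetwork (X : Type*) [TopologicalSpace X] (N : Set (Set X)) : Prop :=
  ∀ U K : Set X, IsOpen U → IsCompact K → K ⊆ U →
    ∃ F : Set (Set X), F ⊆ N ∧ F.Finite ∧ K ⊆ ⋃₀ F ∧ ⋃₀ F ⊆ U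

/-- `X` is an `ℵ₀`-space: a regular space with a countable k-network. -/
def AlephZeroSpace (X : Type*) [TopologicalSpace X] : Prop :=
  RegularSpace X ∧ ∃ N : Set (Set X), N.Countable ∧ IsKNetwork X N

/-- Proposition 4.1(i): a regular space covered by an increasing sequence of closed
`ℵ₀`-subspaces, such that every compact set lies in some member of the sequence, is an
`ℵ₀`-space. -/
theorem alephZero_of_increasing_closed_cover
    {X : Type*} [TopologicalSpace X] [RegularSpace X]
    (A : ℕ → Set X) (hmono : Monotone A) (hclosed : ∀ n, IsClosed (A n))
    (hcover : (⋃ n, A n) = univ)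
    (haleph : ∀ n, AlephZeroSpace (A n))
    (hcompact : ∀ K : Set X, IsCompact K → ∃ n, K ⊆ A n) :
    AlephZeroSpace X := by
  refine ⟨inferInstance, ?_⟩
  choose N hNc hNk using fun n => (haleph n).2
  refine ⟨⋃ n, (fun S : Set (A n) => ((↑) : A n → X) '' S) '' N n, ?_, ?_⟩
  · exact countable_iUnion fun n => (hNc n).image _
  · intro U K hU hK hKU
    obtain ⟨n, hKn⟩ := hcompact K hK
    have hK' : IsCompact (((↑) : A n → X) ⁻¹' K) := by
      rw [IsEmbedding.subtypeVal.isCompact_iff, Subtype.image_preimage_coe,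
        inter_eq_right.mpr hKn]
      exact hK
    obtain ⟨F, hFN, hFfin, hKF, hFU⟩ := hNk n (((↑) : A n → X) ⁻¹' U)
      (((↑) : A n → X) ⁻¹' K) (hU.preimage continuous_subtype_val) hK'
      (preimage_mono hKU)
    refine ⟨(fun S : Set (A n) => ((↑) : A n → X) '' S) '' F,
      subset_iUnion_of_subset n (image_mono hFN), hFfin.image _, ?_, ?_⟩
    · intro x hx
      obtain ⟨S, hSF, hxS⟩ := hKF (show (⟨x, hKn hx⟩ : A n) ∈ _ from hx)
      exact ⟨_, ⟨S, hSF, rfl⟩, ⟨_, hxS, rfl⟩⟩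
    · rintro x ⟨_, ⟨S, hSF, rfl⟩, ⟨y, hyS, rfl⟩⟩
      exact hFU ⟨S, hSF, hyS⟩
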